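/- Let K ≤ F_d be a subgroup of the free group with rad(K) ≥ r. Then for any coset Kg in the Schreier graph Sch(K) with |Kg| > r, there exists a unique g_r ∈ F_d with |g_r| = r such that every path in Sch(K) from Kg to the root K passes through the vertex K g_r. (A path from Kg to K is a sequence of cosets Kg = α_0, α_1, …, α_m = K where each α_{i+1} = α_i s_i for some s_i ∈ S ∪ S⁻¹.) -/

import Mathlib

open Filter MeasureTheory
open scoped ENNReal Topology

noncomputable section

namespace Paper

variable {G : Type*} [Group G]

def conv (μ ν : PMF G) : PMF G := μ.bind fun x => ν.map fun y => x * y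
def iterConv (μ : PMF G) : ℕ → PMF G
  | 0 => PMF.pure 1
  | t + 1 => conv (iterConv μ t) μ
def wordLength (S : Set G) (x : G) : ℕ :=
  sInf {n | ∃ l : List G, l.length = n ∧ (∀ a ∈ l, a ∈ S) ∧ l.prod = x}
abbrev RightCoset (K : Subgroup G) := Quotient (QuotientGroup.rightRel K)
def rcMk (K : Subgroup G) (g : G) : RightCoset K :=
  Quotient.mk (QuotientGroup.rightRel K) g

/-- Right multiplication by `g` on the space of right cosets: `Kx ↦ Kxg`. -/
def cosetMul (K : Subgroup G) (α : RightCoset K) (g : G) : RightCoset K :=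
  Quotient.liftOn α (fun x => rcMk K (x * g)) (by
    intro a b h
    have h' : b * a⁻¹ ∈ K := QuotientGroup.rightRel_apply.mp h
    apply Quotient.sound
    show QuotientGroup.rightRel K (a * g) (b * g)
    rw [QuotientGroup.rightRel_apply]
    have e : b * g * (a * g)⁻¹ = b * a⁻¹ := by group
    rw [e]; exact h')

/-- The graph distance in the Schreier graph of `K` (w.r.t. the generating set `S`)
from the coset `α` to the root coset `K`. -/
def cosetDist (S : Set G) (K : Subgroup G) (α : RightCoset K) : ℕ :=
  sInf {n | ∃ l : List G, l.length = n ∧ (∀ a ∈ l, a ∈ S) ∧ rcMk K l.prod = α}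

/-- The ball of radius `ρ` about the root in the Schreier graph of `K`. -/
def schreierBall (S : Set G) (K : Subgroup G) (ρ : ℕ) : Set (RightCoset K) :=
  {β | cosetDist S K β ≤ ρ}

open scoped Classical in
/-- The Green function `g_K^{m+}(α, B) = ∑_{t ≥ m} P[α X_t ∈ B]`. -/
def green (μ : PMF G) (K : Subgroup G) (m : ℕ) (α : RightCoset K)
    (B : Set (RightCoset K)) : ℝ≥0∞ :=
  ∑' (t : ℕ) (x : G), if cosetMul K α x ∈ B then iterConv μ (m + t) x else 0

/-- A subgroup `K` is `μ`-transient if the expected number of returns of the induced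
walk on `K\G` to the root is finite, i.e. `∑_t μ^{*t}(K) < ∞`. -/
def IsTransient (μ : PMF G) (K : Subgroup G) : Prop :=
  (∑' (t : ℕ) (x : ↥K), iterConv μ t ↑x) < ⊤

/-- The standard symmetric free generating set of the free group `F_d`. -/
def genSet (d : ℕ) : Set (FreeGroup (Fin d)) :=
  {x | ∃ i : Fin d, x = FreeGroup.of i ∨ x = (FreeGroup.of i)⁻¹}

/-- Word length in the free group. -/
def flen {d : ℕ} (x : FreeGroup (Fin d)) : ℕ := wordLength (genSet d) x

/-- `rad(g)`: the largest `k` such that the reduced word `s_1 ⋯ s_n` of `g` satisfies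
`s_1 ⋯ s_k = (s_{n-k+1} ⋯ s_n)⁻¹`. -/
def freeRad {d : ℕ} (g : FreeGroup (Fin d)) : ℕ :=
  sSup {k : ℕ | k ≤ g.toWord.length ∧
    g.toWord.take k = FreeGroup.invRev (g.toWord.drop (g.toWord.length - k))}

/-- `rad(K) ≥ r`, i.e. every nontrivial element of `K` has `rad` at least `r`. -/
def RadGE {d : ℕ} (K : Subgroup (FreeGroup (Fin d))) (r : ℕ) : Prop :=
  ∀ g ∈ K, g ≠ 1 → r ≤ freeRad g

/-- `pref_r(Kg)`: the `r`-prefix of a vertex of the Schreier graph of `K ≤ F_d`.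
If `|Kg| ≤ r` it is the unique `f` with `|f| = |Kg|` and `Kf = Kg`; if `|Kg| > r` it is
the unique `f` with `|f| = r` such that every path from `Kg` to the root `K` in the
Schreier graph passes through `Kf`.  (Existence and uniqueness hold whenever
`rad(K) ≥ r`.) -/
def prefCoset {d : ℕ} (K : Subgroup (FreeGroup (Fin d))) (r : ℕ)
    (α : RightCoset K) : FreeGroup (Fin d) :=
  if cosetDist (genSet d) K α ≤ r then
    Classical.epsilon fun f : FreeGroup (Fin d) =>
      flen f = cosetDist (genSet d) K α ∧ rcMk K f = α
  else
    Classical.epsilon fun f : FreeGroup (Fin d) =>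
      flen f = r ∧
      ∀ (m : ℕ) (c : ℕ → RightCoset K), c 0 = α → c m = rcMk K 1 →
        (∀ i < m, ∃ s ∈ genSet d, c (i + 1) = cosetMul K (c i) s) →
        ∃ i ≤ m, c i = rcMk K f

/-- The length-`r` prefix of the reduced word of an element of the free group
(the element itself if `|x| ≤ r`). -/
def prefWord {d : ℕ} (r : ℕ) (x : FreeGroup (Fin d)) : FreeGroup (Fin d) :=
  FreeGroup.mk (x.toWord.take r)


section Aux

open FreeGroup List

variable {d : ℕ}

abbrev Ltr (d : ℕ) := Fin d × Bool

/-- The no-cancellation relation between adjacent letters of a reduced word. -/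
def RR {d : ℕ} (x y : Ltr d) : Prop := ¬(x.1 = y.1 ∧ x.2 = !y.2)

lemma length_reduce_le (w : List (Ltr d)) : (FreeGroup.reduce w).length ≤ w.length :=
  FreeGroup.reduce.red.length_le

lemma red_iff_chain {w : List (Ltr d)} :
    FreeGroup.reduce w = w ↔ w.Chain' RR := by
  induction w with
  | nil => simp; exact List.isChain_nil
  | cons x w ih =>
    constructor
    · intro h
      rw [FreeGroup.reduce.cons] at h
      cases hr : FreeGroup.reduce w with
      | nil =>
        rw [hr] at h
        change [x] = x :: w at h
        have hw : w = [] := by simpa using h.symm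
        subst hw; exact List.isChain_singleton x
      | cons y t =>
        rw [hr] at h
        change (if x.1 = y.1 ∧ x.2 = !y.2 then t else x :: y :: t) = x :: w at h
        by_cases hc : x.1 = y.1 ∧ x.2 = !y.2
        · rw [if_pos hc] at h
          have h1 := length_reduce_le w
          rw [hr, h] at h1
          simp at h1
        · rw [if_neg hc] at h
          have hw : w = y :: t := by
            have h' := h
            simp only [List.cons.injEq] at h'
            exact h'.2.symm
          have hred : FreeGroup.reduce w = w := by rw [hr, hw]
          have hch := ih.mp hred
          rw [hw] at hch ⊢
          exact List.isChain_cons_cons.mpr ⟨hc, hch⟩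
    · intro h
      cases w with
      | nil => exact FreeGroup.reduce_singleton x
      | cons y t =>
        have h1 := List.isChain_cons_cons.mp h
        have h2 : FreeGroup.reduce (y :: t) = y :: t := ih.mpr h1.2
        rw [FreeGroup.reduce.cons, h2]
        change (if x.1 = y.1 ∧ x.2 = !y.2 then t else x :: y :: t) = _
        rw [if_neg h1.1]

lemma red_prefix {w v : List (Ltr d)} (h : FreeGroup.reduce w = w) (hp : v <+: w) :
    FreeGroup.reduce v = v :=
  red_iff_chain.mpr ((red_iff_chain.mp h).prefix hp)

lemma mk_pair (a : Ltr d) : FreeGroup.mk [(a.1, !a.2), a] = (1 : FreeGroup (Fin d)) := by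
  have h1 : FreeGroup.mk [(a.1, !a.2)] = (FreeGroup.mk [a])⁻¹ := by
    rw [FreeGroup.inv_mk]
    have h2 : FreeGroup.invRev [a] = [(a.1, !a.2)] := by simp [FreeGroup.invRev]
    rw [h2]
  calc FreeGroup.mk [(a.1, !a.2), a]
      = FreeGroup.mk [(a.1, !a.2)] * FreeGroup.mk [a] := by rw [FreeGroup.mul_mk]; rfl
    _ = 1 := by rw [h1, inv_mul_cancel]

lemma reduce_middle (u v : List (Ltr d)) (a : Ltr d) :
    FreeGroup.reduce (u ++ (a.1, !a.2) :: a :: v) = FreeGroup.reduce (u ++ v) := by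
  have hmk : FreeGroup.mk (u ++ (a.1, !a.2) :: a :: v) = FreeGroup.mk (u ++ v) := by
    rw [← FreeGroup.mul_mk, ← FreeGroup.mul_mk]
    congr 1
    have h2 : ((a.1, !a.2) :: a :: v) = [(a.1, !a.2), a] ++ v := rfl
    rw [h2, ← FreeGroup.mul_mk, mk_pair, one_mul]
  calc FreeGroup.reduce (u ++ (a.1, !a.2) :: a :: v)
      = (FreeGroup.mk (u ++ (a.1, !a.2) :: a :: v)).toWord := (FreeGroup.toWord_mk).symm
    _ = (FreeGroup.mk (u ++ v)).toWord := by rw [hmk]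
    _ = FreeGroup.reduce (u ++ v) := FreeGroup.toWord_mk

lemma red_append {u v : List (Ltr d)} (hu : FreeGroup.reduce u = u) (hv : FreeGroup.reduce v = v)
    (hj : ∀ x ∈ u.getLast?, ∀ y ∈ v.head?, RR x y) : FreeGroup.reduce (u ++ v) = u ++ v :=
  red_iff_chain.mpr (List.isChain_append.mpr ⟨red_iff_chain.mp hu, red_iff_chain.mp hv, hj⟩)

lemma cancel_lemma : ∀ (b a : List (Ltr d)), FreeGroup.reduce a = a → FreeGroup.reduce b = b →
    ∃ c a₁ b₁ : List (Ltr d), a = a₁ ++ FreeGroup.invRev c ∧ b = c ++ b₁ ∧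
      FreeGroup.reduce (a ++ b) = a₁ ++ b₁ := by
  intro b
  induction b with
  | nil =>
    intro a ha _
    exact ⟨[], a, [], by simp [FreeGroup.invRev], by simp, by simpa using ha⟩
  | cons x b' ih =>
    intro a ha hb
    by_cases hend : ∃ a₀ : List (Ltr d), a = a₀ ++ [(x.1, !x.2)]
    · obtain ⟨a₀, rfl⟩ := hend
      have ha₀ : FreeGroup.reduce a₀ = a₀ := red_prefix ha ⟨[(x.1, !x.2)], rfl⟩
      have hb' : FreeGroup.reduce b' = b' := red_iff_chain.mpr ((red_iff_chain.mp hb).tail)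
      obtain ⟨c, a₁, b₁, h1, h2, h3⟩ := ih a₀ ha₀ hb'
      refine ⟨x :: c, a₁, b₁, ?_, ?_, ?_⟩
      · rw [h1]; simp [FreeGroup.invRev]
      · simp [h2]
      · have he : (a₀ ++ [(x.1, !x.2)]) ++ x :: b' = a₀ ++ ((x.1, !x.2) :: x :: b') := by simp
        rw [he, reduce_middle, h3]
    · refine ⟨[], a, x :: b', by simp [FreeGroup.invRev], rfl, ?_⟩
      apply red_append ha hb
      intro p hp y hy
      have hy2 : x = y := by simpa using hy
      subst hy2
      intro hRv
      have hp' : p = (x.1, !x.2) := Prod.ext hRv.1 hRv.2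
      exact hend ⟨a.dropLast, by rw [← hp']; exact (List.dropLast_append_getLast? p hp).symm⟩


lemma invRev_append (u v : List (Ltr d)) :
    FreeGroup.invRev (u ++ v) = FreeGroup.invRev v ++ FreeGroup.invRev u := by
  simp [FreeGroup.invRev]

lemma invRev_single (a : Ltr d) : FreeGroup.invRev [a] = [(a.1, !a.2)] := by
  simp [FreeGroup.invRev]

lemma take_invRev (l : List (Ltr d)) (j : ℕ) :
    (FreeGroup.invRev l).take j = FreeGroup.invRev (l.drop (l.length - j)) := by
  simp only [FreeGroup.invRev, List.take_reverse, List.length_map]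
  congr 1
  exact List.map_drop.symm

lemma pal_aux : ∀ (N : ℕ) (w : List (Ltr d)), w.length ≤ N → w.Chain' RR → w ≠ [] →
    w = FreeGroup.invRev w → False := by
  intro N
  induction N with
  | zero =>
    intro w h1 _ h3 _
    exact h3 (List.eq_nil_of_length_eq_zero (Nat.le_zero.mp h1))
  | succ N ih =>
    intro w hlen hch hne hpal
    cases w with
    | nil => exact hne rfl
    | cons a w' =>
      rcases List.eq_nil_or_concat w' with hw'nil | ⟨mid, b, hsplit⟩
      · subst hw'nil
        rw [invRev_single] at hpal
        have ha : a = (a.1, !a.2) := by simpa using hpal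
        have := congrArg Prod.snd ha
        simp at this
      · subst hsplit
        rw [List.concat_eq_append] at hlen hch hne hpal
        -- w = a :: (mid ++ [b])
        have hinv : FreeGroup.invRev (a :: (mid ++ [b]))
            = (b.1, !b.2) :: (FreeGroup.invRev mid ++ [(a.1, !a.2)]) := by
          have h1 : a :: (mid ++ [b]) = [a] ++ (mid ++ [b]) := rfl
          rw [h1, invRev_append, invRev_append, invRev_single, invRev_single]
          simp
        rw [hinv] at hpal
        have hab : a = (b.1, !b.2) := (List.cons.injEq .. ▸ hpal).1
        have htl : mid ++ [b] = FreeGroup.invRev mid ++ [(a.1, !a.2)] := (List.cons.injEq .. ▸ hpal).2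
        have hba : (a.1, !a.2) = b := by rw [hab]; simp
        rw [hba] at htl
        have hmid : mid = FreeGroup.invRev mid := by
          have := List.append_inj' htl (by simp [FreeGroup.invRev_length])
          exact this.1
        rcases List.eq_nil_or_concat mid with hmidnil | ⟨_, _, hmidsplit⟩
        · subst hmidnil
          -- w = [a, b] with a = (b.1, !b.2)
          have hRR : RR a b := (List.isChain_cons_cons.mp hch).1
          exact hRR ⟨by rw [hab], by rw [hab]⟩
        · have hmidne : mid ≠ [] := by subst hmidsplit; simp
          apply ih mid ?_ ?_ hmidne hmid
          · have := hlen; simp at this; omega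
          · apply hch.infix
            exact ⟨[a], [b], by simp⟩

lemma pal {w : List (Ltr d)} (hch : w.Chain' RR) (hne : w ≠ [])
    (hpal : w = FreeGroup.invRev w) : False :=
  pal_aux w.length w le_rfl hch hne hpal


lemma toWord_mk_take (x : FreeGroup (Fin d)) (k : ℕ) :
    (FreeGroup.mk (x.toWord.take k)).toWord = x.toWord.take k := by
  rw [FreeGroup.toWord_mk]
  exact red_prefix (FreeGroup.reduce_toWord x) (List.take_prefix _ _)

lemma norm_mk_take {x : FreeGroup (Fin d)} {k : ℕ} (hk : k ≤ x.toWord.length) :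
    FreeGroup.norm (FreeGroup.mk (x.toWord.take k)) = k := by
  rw [FreeGroup.norm, toWord_mk_take, List.length_take]
  omega

lemma toWord_mul_single (x : FreeGroup (Fin d)) (a : Ltr d) :
    (x * FreeGroup.mk [a]).toWord = x.toWord ++ [a] ∨
    (x * FreeGroup.mk [a]).toWord = x.toWord.dropLast := by
  have hx : x * FreeGroup.mk [a] = FreeGroup.mk (x.toWord ++ [a]) := by
    rw [← FreeGroup.mul_mk, FreeGroup.mk_toWord]
  rw [hx, FreeGroup.toWord_mk]
  by_cases hend : ∃ w₀, x.toWord = w₀ ++ [(a.1, !a.2)]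
  · right
    obtain ⟨w₀, hw⟩ := hend
    have hw₀ : FreeGroup.reduce w₀ = w₀ := red_prefix (FreeGroup.reduce_toWord x) ⟨[(a.1, !a.2)], hw.symm⟩
    rw [hw]
    have he : (w₀ ++ [(a.1, !a.2)]) ++ [a] = w₀ ++ ((a.1, !a.2) :: a :: []) := by simp
    rw [he, reduce_middle]
    simp only [List.append_nil, List.dropLast_concat]
    exact hw₀
  · left
    apply red_append (FreeGroup.reduce_toWord x) (FreeGroup.reduce_singleton a)
    intro p hp y hy
    have hy2 : a = y := by simpa using hy
    subst hy2
    intro hRv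
    have hp' : p = (a.1, !a.2) := Prod.ext hRv.1 hRv.2
    exact hend ⟨x.toWord.dropLast, by rw [← hp']; exact (List.dropLast_append_getLast? p hp).symm⟩

lemma walk_prefix (q : FreeGroup (Fin d)) :
    ∀ (m : ℕ) (x : ℕ → FreeGroup (Fin d)),
      (∀ i < m, ∃ a : Ltr d, x (i + 1) = x i * FreeGroup.mk [a]) →
      q.toWord <+: (x 0).toWord → x m = 1 → ∃ i ≤ m, x i = q := by
  intro m
  induction m with
  | zero =>
    intro x _ hpre hend
    refine ⟨0, le_refl 0, ?_⟩
    rw [hend] at hpre ⊢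
    have h1 : q.toWord = [] := List.prefix_nil.mp (by simpa [FreeGroup.toWord_one] using hpre)
    exact (FreeGroup.toWord_eq_nil_iff.mp h1).symm
  | succ m ih =>
    intro x hstep hpre hend
    by_cases hp1 : q.toWord <+: (x 1).toWord
    · obtain ⟨i, him, hxi⟩ := ih (fun j => x (j + 1)) (fun j hj => hstep (j + 1) (by omega)) hp1 hend
      exact ⟨i + 1, by omega, hxi⟩
    · obtain ⟨a, hxa⟩ := hstep 0 (by omega)
      rcases toWord_mul_single (x 0) a with hcase | hcase
      · exfalso
        apply hp1
        rw [hxa, hcase]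
        exact hpre.trans ⟨[a], rfl⟩
      · refine ⟨0, by omega, ?_⟩
        have hw : q.toWord = (x 0).toWord := by
          by_cases hlen : q.toWord.length < (x 0).toWord.length
          · exfalso
            apply hp1
            rw [hxa, hcase, List.dropLast_eq_take]
            exact List.prefix_take_iff.mpr ⟨hpre, by omega⟩
          · exact hpre.eq_of_length (le_antisymm hpre.length_le (by omega))
        exact (FreeGroup.toWord_injective hw).symm

lemma rcMk_eq_iff {K : Subgroup (FreeGroup (Fin d))} {x y : FreeGroup (Fin d)} :
    rcMk K x = rcMk K y ↔ y * x⁻¹ ∈ K := by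
  constructor
  · intro h
    exact QuotientGroup.rightRel_apply.mp (Quotient.exact h)
  · intro h
    exact Quotient.sound (QuotientGroup.rightRel_apply.mpr h)

lemma rcMk_mul_left {K : Subgroup (FreeGroup (Fin d))} {k x : FreeGroup (Fin d)} (hk : k ∈ K) :
    rcMk K (k * x) = rcMk K x := by
  rw [rcMk_eq_iff]
  have h1 : x * (k * x)⁻¹ = k⁻¹ := by group
  rw [h1]
  exact inv_mem hk

lemma cosetMul_rcMk {K : Subgroup (FreeGroup (Fin d))} (x s : FreeGroup (Fin d)) :
    cosetMul K (rcMk K x) s = rcMk K (x * s) := rfl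

lemma mk_single_mem_genSet (a : Ltr d) : FreeGroup.mk [a] ∈ genSet d := by
  obtain ⟨i, b⟩ := a
  refine ⟨i, ?_⟩
  cases b
  · right
    show FreeGroup.mk [(i, false)] = (FreeGroup.mk [(i, true)])⁻¹
    rw [FreeGroup.inv_mk, invRev_single]
    rfl
  · left
    rfl

lemma genSet_exists_mk {s : FreeGroup (Fin d)} (hs : s ∈ genSet d) :
    ∃ a : Ltr d, s = FreeGroup.mk [a] := by
  obtain ⟨i, h | h⟩ := hs
  · exact ⟨(i, true), h⟩
  · refine ⟨(i, false), ?_⟩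
    rw [h]
    show (FreeGroup.mk [(i, true)])⁻¹ = _
    rw [FreeGroup.inv_mk, invRev_single]
    rfl

lemma genSet_inv {s : FreeGroup (Fin d)} (hs : s ∈ genSet d) : s⁻¹ ∈ genSet d := by
  obtain ⟨i, h | h⟩ := hs
  · exact ⟨i, Or.inr (by rw [h])⟩
  · exact ⟨i, Or.inl (by rw [h, inv_inv])⟩

lemma prod_map_mk (w : List (Ltr d)) :
    (w.map fun a => FreeGroup.mk [a]).prod = FreeGroup.mk w := by
  induction w with
  | nil => simp [FreeGroup.one_eq_mk]
  | cons a w ih =>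
    rw [List.map_cons, List.prod_cons, ih, FreeGroup.mul_mk]
    rfl

lemma norm_prod_le (l : List (FreeGroup (Fin d))) (hl : ∀ s ∈ l, s ∈ genSet d) :
    FreeGroup.norm l.prod ≤ l.length := by
  induction l with
  | nil => simp [FreeGroup.norm_one]
  | cons s l ih =>
    rw [List.prod_cons]
    have h1 : FreeGroup.norm s ≤ 1 := by
      obtain ⟨a, rfl⟩ := genSet_exists_mk (hl s List.mem_cons_self)
      exact FreeGroup.norm_mk_le
    calc FreeGroup.norm (s * l.prod) ≤ FreeGroup.norm s + FreeGroup.norm l.prod :=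
          FreeGroup.norm_mul_le _ _
      _ ≤ 1 + l.length := add_le_add h1 (ih fun t ht => hl t (List.mem_cons_of_mem s ht))
      _ = (s :: l).length := by simp [Nat.add_comm]

lemma flen_eq_norm (x : FreeGroup (Fin d)) : flen x = FreeGroup.norm x := by
  have hmem : FreeGroup.norm x ∈
      {n | ∃ l : List (FreeGroup (Fin d)), l.length = n ∧ (∀ a ∈ l, a ∈ genSet d) ∧ l.prod = x} := by
    refine ⟨x.toWord.map fun a => FreeGroup.mk [a], by simp [FreeGroup.norm], ?_, ?_⟩
    · intro s hs
      obtain ⟨a, _, rfl⟩ := List.mem_map.mp hs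
      exact mk_single_mem_genSet a
    · rw [prod_map_mk, FreeGroup.mk_toWord]
  apply _root_.le_antisymm
  · exact Nat.sInf_le hmem
  · apply le_csInf ⟨_, hmem⟩
    rintro n ⟨l, hlen, hgen, hprod⟩
    subst hlen
    rw [← hprod]
    exact norm_prod_le l hgen

lemma cosetDist_le_norm {K : Subgroup (FreeGroup (Fin d))} (x : FreeGroup (Fin d)) :
    cosetDist (genSet d) K (rcMk K x) ≤ FreeGroup.norm x := by
  apply Nat.sInf_le
  refine ⟨x.toWord.map fun a => FreeGroup.mk [a], by simp [FreeGroup.norm], ?_, ?_⟩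
  · intro s hs
    obtain ⟨a, _, rfl⟩ := List.mem_map.mp hs
    exact mk_single_mem_genSet a
  · rw [prod_map_mk, FreeGroup.mk_toWord]

lemma cosetDist_set_nonempty {K : Subgroup (FreeGroup (Fin d))} (α : RightCoset K) :
    {n | ∃ l : List (FreeGroup (Fin d)), l.length = n ∧ (∀ a ∈ l, a ∈ genSet d) ∧
      rcMk K l.prod = α}.Nonempty := by
  refine Quotient.inductionOn α ?_
  intro x
  refine ⟨FreeGroup.norm x, x.toWord.map fun a => FreeGroup.mk [a], by simp [FreeGroup.norm], ?_, ?_⟩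
  · intro s hs
    obtain ⟨a, _, rfl⟩ := List.mem_map.mp hs
    exact mk_single_mem_genSet a
  · rw [prod_map_mk, FreeGroup.mk_toWord]
    rfl

lemma exists_min_rep {K : Subgroup (FreeGroup (Fin d))} (α : RightCoset K) :
    ∃ p : FreeGroup (Fin d), rcMk K p = α ∧
      FreeGroup.norm p = cosetDist (genSet d) K α := by
  have hmem : cosetDist (genSet d) K α ∈ {n | ∃ l : List (FreeGroup (Fin d)), l.length = n ∧
      (∀ a ∈ l, a ∈ genSet d) ∧ rcMk K l.prod = α} := Nat.sInf_mem (cosetDist_set_nonempty α)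
  obtain ⟨l, hlen, hgen, hprod⟩ := hmem
  refine ⟨l.prod, hprod, ?_⟩
  have h1 : FreeGroup.norm l.prod ≤ cosetDist (genSet d) K α := hlen ▸ norm_prod_le l hgen
  have h2 : cosetDist (genSet d) K α ≤ FreeGroup.norm l.prod := by
    rw [← hprod]
    exact cosetDist_le_norm l.prod
  omega

lemma cosetDist_step {K : Subgroup (FreeGroup (Fin d))} (α : RightCoset K)
    {s : FreeGroup (Fin d)} (hs : s ∈ genSet d) :
    cosetDist (genSet d) K α ≤ cosetDist (genSet d) K (cosetMul K α s) + 1 := by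
  refine Quotient.inductionOn α ?_
  intro x
  obtain ⟨l, hlen, hgen, hprod⟩ := Nat.sInf_mem
    (cosetDist_set_nonempty (K := K) (rcMk K (x * s)))
  have hK : x * s * l.prod⁻¹ ∈ K := rcMk_eq_iff.mp hprod
  have hmem : (l ++ [s⁻¹]).length ∈ {n | ∃ l' : List (FreeGroup (Fin d)), l'.length = n ∧
      (∀ a ∈ l', a ∈ genSet d) ∧ rcMk K l'.prod = Quotient.mk (QuotientGroup.rightRel K) x} := by
    refine ⟨l ++ [s⁻¹], rfl, ?_, ?_⟩
    · intro a ha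
      rcases List.mem_append.mp ha with h | h
      · exact hgen a h
      · rw [List.mem_singleton.mp h]
        exact genSet_inv hs
    · show rcMk K (l ++ [s⁻¹]).prod = rcMk K x
      rw [List.prod_append, List.prod_singleton]
      rw [rcMk_eq_iff]
      have he : x * (l.prod * s⁻¹)⁻¹ = x * s * l.prod⁻¹ := by group
      rw [he]
      exact hK
  have h3 : cosetDist (genSet d) K (Quotient.mk (QuotientGroup.rightRel K) x)
      ≤ (l ++ [s⁻¹]).length := Nat.sInf_le hmem
  simp only [List.length_append, List.length_singleton] at h3
  have h2 : cosetDist (genSet d) K (cosetMul K (Quotient.mk (QuotientGroup.rightRel K) x) s)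
      = l.length := hlen.symm
  omega

lemma path_dist {K : Subgroup (FreeGroup (Fin d))} (m : ℕ) (c : ℕ → RightCoset K)
    (hstep : ∀ i < m, ∃ s ∈ genSet d, c (i + 1) = cosetMul K (c i) s) :
    ∀ i ≤ m, cosetDist (genSet d) K (c 0) ≤ cosetDist (genSet d) K (c i) + i := by
  intro i
  induction i with
  | zero => intro _; simp
  | succ j ih =>
    intro hj
    have h1 := ih (by omega)
    obtain ⟨s, hs, hc⟩ := hstep j (by omega)
    have h2 := cosetDist_step (c j) hs
    rw [← hc] at h2
    omega

lemma rad_spec {K : Subgroup (FreeGroup (Fin d))} {r : ℕ} (hrad : RadGE K r)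
    {h : FreeGroup (Fin d)} (hK : h ∈ K) (h1 : h ≠ 1) :
    h.toWord.take r = FreeGroup.invRev (h.toWord.drop (h.toWord.length - r)) ∧
    2 * r < h.toWord.length := by
  have hr : r ≤ freeRad h := hrad h hK h1
  have h0mem : 0 ∈ {k : ℕ | k ≤ h.toWord.length ∧
      h.toWord.take k = FreeGroup.invRev (h.toWord.drop (h.toWord.length - k))} := by
    refine ⟨Nat.zero_le _, ?_⟩
    simp [FreeGroup.invRev]
  have hbdd : BddAbove {k : ℕ | k ≤ h.toWord.length ∧
      h.toWord.take k = FreeGroup.invRev (h.toWord.drop (h.toWord.length - k))} :=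
    ⟨h.toWord.length, fun k hk => hk.1⟩
  have hsup : freeRad h ≤ h.toWord.length ∧
      h.toWord.take (freeRad h) =
        FreeGroup.invRev (h.toWord.drop (h.toWord.length - freeRad h)) :=
    Nat.sSup_mem ⟨0, h0mem⟩ hbdd
  obtain ⟨hk₀len, hk₀eq⟩ := hsup
  have hmemr : h.toWord.take r = FreeGroup.invRev (h.toWord.drop (h.toWord.length - r)) := by
    have e1 : h.toWord.take r = (h.toWord.take (freeRad h)).take r := by
      rw [List.take_take, min_eq_left hr]
    rw [e1, hk₀eq, take_invRev, List.length_drop, List.drop_drop]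
    congr 2
    omega
  refine ⟨hmemr, ?_⟩
  by_contra hcon
  push_neg at hcon
  have hwne : h.toWord ≠ [] := fun hnil => h1 (FreeGroup.toWord_eq_nil_iff.mp hnil)
  have hrlen : r ≤ h.toWord.length := le_trans hr hk₀len
  set w := h.toWord with hwdef
  set n := w.length with hn
  have hnpos : 1 ≤ n := by
    rw [hn]
    exact List.length_pos_iff.mpr hwne
  have hsplitw : w = w.take (n - r) ++ w.drop (n - r) := (List.take_append_drop _ _).symm
  set A := w.take (n - r) with hA
  set B := w.drop (n - r) with hB
  have hlA : A.length = n - r := by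
    rw [hA, List.length_take, min_eq_left (by omega)]
  have hlB : B.length = r := by
    rw [hB, List.length_drop]
    omega
  set C := B.take (r - (n - r)) with hC
  set D := B.drop (r - (n - r)) with hD
  have hlC : C.length = r - (n - r) := by
    rw [hC, List.length_take, hlB, min_eq_left (by omega)]
  have hBCD : B = C ++ D := (List.take_append_drop _ _).symm
  have hLHS : w.take r = A ++ C := by
    conv_lhs => rw [hsplitw]
    rw [List.take_append,
      List.take_of_length_le (by rw [hlA]; omega), hlA]
  have hkey : A ++ C = FreeGroup.invRev D ++ FreeGroup.invRev C := by
    rw [← hLHS, hmemr, hBCD, invRev_append]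
  have hinj := List.append_inj' hkey (by rw [FreeGroup.invRev_length])
  obtain ⟨hAD, hCC⟩ := hinj
  by_cases hCnil : C = []
  · apply h1
    have hBD : B = D := by rw [hBCD, hCnil, List.nil_append]
    have hh : h = FreeGroup.mk w := (FreeGroup.mk_toWord).symm
    rw [hh, hsplitw, ← FreeGroup.mul_mk]
    have hABeq : A = FreeGroup.invRev B := by rw [hAD, hBD]
    rw [hABeq, ← FreeGroup.inv_mk, inv_mul_cancel]
  · apply pal (w := C) ?_ hCnil hCC
    have hCinf : C <:+: w := by
      refine ⟨A, D, ?_⟩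
      rw [List.append_assoc, ← hBCD, ← hsplitw]
    exact (red_iff_chain.mp (FreeGroup.reduce_toWord h)).infix hCinf

lemma exists_pass (r : ℕ) (K : Subgroup (FreeGroup (Fin d))) (hrad : RadGE K r)
    (g p : FreeGroup (Fin d)) (hp : rcMk K p = rcMk K g)
    (hplen : FreeGroup.norm p = cosetDist (genSet d) K (rcMk K g))
    (m : ℕ) (c : ℕ → RightCoset K) (h0 : c 0 = rcMk K g) (hm : c m = rcMk K 1)
    (hstep : ∀ i < m, ∃ s ∈ genSet d, c (i + 1) = cosetMul K (c i) s) :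
    ∃ i ≤ m, c i = rcMk K (FreeGroup.mk (p.toWord.take r)) := by
  classical
  set s' : ℕ → FreeGroup (Fin d) :=
    fun i => if hi : i < m then (hstep i hi).choose else 1 with hs'
  have hsgen : ∀ i, i < m → s' i ∈ genSet d := by
    intro i hi
    rw [hs']
    simp only [dif_pos hi]
    exact (hstep i hi).choose_spec.1
  have hcs : ∀ i, i < m → c (i + 1) = cosetMul K (c i) (s' i) := by
    intro i hi
    rw [hs']
    simp only [dif_pos hi]
    exact (hstep i hi).choose_spec.2
  set G : ℕ → FreeGroup (Fin d) := fun i => g * ((List.range i).map s').prod with hG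
  have hG0 : G 0 = g := by simp [hG]
  have hGsucc : ∀ i, G (i + 1) = G i * s' i := by
    intro i
    rw [hG]
    simp only [List.range_succ, List.map_append, List.prod_append, List.map_cons,
      List.map_nil, List.prod_cons, List.prod_nil, mul_one]
    rw [mul_assoc]
  have hcG : ∀ i, i ≤ m → c i = rcMk K (G i) := by
    intro i
    induction i with
    | zero => intro _; rw [h0, hG0]
    | succ j ihj =>
      intro hjm
      rw [hcs j (by omega), ihj (by omega), cosetMul_rcMk, hGsucc]
  have hGmK : G m ∈ K := by
    have h2 := (hcG m le_rfl).symm.trans hm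
    have h3 := rcMk_eq_iff.mp h2
    simpa using inv_mem h3
  set z := (G m)⁻¹ * g with hz
  set x : ℕ → FreeGroup (Fin d) := fun i => (G m)⁻¹ * G i with hx
  have hx0 : x 0 = z := by
    show (G m)⁻¹ * G 0 = z
    rw [hG0, hz]
  have hxm : x m = 1 := by rw [hx]; exact inv_mul_cancel _
  have hxstep : ∀ i < m, ∃ a : Ltr d, x (i + 1) = x i * FreeGroup.mk [a] := by
    intro i hi
    obtain ⟨a, ha⟩ := genSet_exists_mk (hsgen i hi)
    refine ⟨a, ?_⟩
    show (G m)⁻¹ * G (i + 1) = (G m)⁻¹ * G i * FreeGroup.mk [a]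
    rw [hGsucc i, ha]
    simp only [hG]
    group
  have hcx : ∀ i, i ≤ m → c i = rcMk K (x i) :=
    fun i hi => (hcG i hi).trans (rcMk_mul_left (inv_mem hGmK)).symm
  have hzg : rcMk K z = rcMk K g := rcMk_mul_left (inv_mem hGmK)
  have hnz : FreeGroup.norm p ≤ FreeGroup.norm z := by
    rw [hplen, ← hzg]
    exact cosetDist_le_norm z
  set h₁ := z * p⁻¹ with hh₁
  have hh₁K : h₁ ∈ K := rcMk_eq_iff.mp (hp.trans hzg.symm)
  have hzp : z = h₁ * p := by rw [hh₁]; group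
  by_cases h₁1 : h₁ = 1
  · have hzp' : z = p := by rw [hzp, h₁1, one_mul]
    have hpre : (FreeGroup.mk (p.toWord.take r)).toWord <+: (x 0).toWord := by
      rw [hx0, hzp', toWord_mk_take]
      exact List.take_prefix _ _
    obtain ⟨i, him, hxi⟩ := walk_prefix _ m x hxstep hpre hxm
    exact ⟨i, him, by rw [hcx i him, hxi]⟩
  · obtain ⟨htake, h2r⟩ := rad_spec hrad hh₁K h₁1
    obtain ⟨d₀, a₁, b₁, hw, hpw, hred⟩ :=
      cancel_lemma p.toWord h₁.toWord (FreeGroup.reduce_toWord h₁) (FreeGroup.reduce_toWord p)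
    have hzmk : z = FreeGroup.mk (h₁.toWord ++ p.toWord) := by
      rw [hzp, ← FreeGroup.mul_mk, FreeGroup.mk_toWord, FreeGroup.mk_toWord]
    have hzw : z.toWord = a₁ ++ b₁ := by
      rw [hzmk, FreeGroup.toWord_mk, hred]
    have hredz : FreeGroup.reduce (a₁ ++ b₁) = a₁ ++ b₁ := by
      rw [← hzw]
      exact FreeGroup.reduce_toWord z
    set t := d₀.length with ht₀
    have hlw : h₁.toWord.length = a₁.length + t := by
      rw [hw]
      simp [FreeGroup.invRev_length]
      exact ht₀.symm
    have hlp : p.toWord.length = t + b₁.length := by rw [hpw]; simp; exact ht₀.symm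
    have hnormz : FreeGroup.norm z = a₁.length + b₁.length := by
      rw [FreeGroup.norm, hzw]
      simp
    have hnormp : FreeGroup.norm p = t + b₁.length := hlp
    have hta : t ≤ a₁.length := by omega
    by_cases htr : t ≤ r
    · -- case (i): cancellation does not reach the prefix
      set k := a₁.length + (r - t) with hk
      have htk1 : (a₁ ++ b₁).take k = a₁ ++ b₁.take (r - t) := by
        rw [List.take_append, List.take_of_length_le (by omega)]
        congr 2
        omega
      have hfw : p.toWord.take r = d₀ ++ b₁.take (r - t) := by
        rw [hpw, List.take_append, List.take_of_length_le (by omega), ← ht₀]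
      set q := FreeGroup.mk ((a₁ ++ b₁).take k) with hq
      have hh₁m : h₁ = FreeGroup.mk (a₁ ++ FreeGroup.invRev d₀) := by
        rw [← hw, FreeGroup.mk_toWord]
      have hqe : q = h₁ * FreeGroup.mk (p.toWord.take r) := by
        rw [hq, htk1, hfw, hh₁m, ← FreeGroup.mul_mk, ← FreeGroup.mul_mk, ← FreeGroup.mul_mk,
          ← FreeGroup.inv_mk]
        group
      have hqw : q.toWord = (a₁ ++ b₁).take k := by
        rw [hq, FreeGroup.toWord_mk]
        exact red_prefix hredz (List.take_prefix _ _)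
      have hqpre : q.toWord <+: (x 0).toWord := by
        rw [hx0, hzw, hqw]
        exact List.take_prefix _ _
      obtain ⟨i, him, hxi⟩ := walk_prefix q m x hxstep hqpre hxm
      refine ⟨i, him, ?_⟩
      rw [hcx i him, hxi, hqe, rcMk_mul_left hh₁K]
    · -- case (ii): deep cancellation
      push_neg at htr
      have hra : r ≤ a₁.length := by omega
      have hinvd : FreeGroup.invRev d₀ = h₁.toWord.drop a₁.length := by
        rw [hw]
        exact List.drop_left.symm
      have hd₀ : d₀ = FreeGroup.invRev (h₁.toWord.drop a₁.length) := by
        rw [← hinvd, FreeGroup.invRev_invRev]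
      have htd : d₀.take r = h₁.toWord.take r := by
        rw [hd₀, take_invRev, List.length_drop, List.drop_drop]
        rw [show a₁.length + (h₁.toWord.length - a₁.length - r) = h₁.toWord.length - r by omega]
        exact htake.symm
      have hfw : p.toWord.take r = h₁.toWord.take r := by
        rw [hpw, List.take_append_of_le_length (by omega), htd]
      have hzt : z.toWord.take r = h₁.toWord.take r := by
        rw [hzw, List.take_append_of_le_length hra]
        have ha₁ : a₁.take r = (h₁.toWord.take a₁.length).take r := by
          rw [hw, List.take_left]
        rw [ha₁, List.take_take, min_eq_left hra]
      have hqe : FreeGroup.mk (z.toWord.take r) = FreeGroup.mk (p.toWord.take r) := by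
        rw [hzt, hfw]
      have hqpre : (FreeGroup.mk (z.toWord.take r)).toWord <+: (x 0).toWord := by
        rw [hx0, toWord_mk_take]
        exact List.take_prefix _ _
      obtain ⟨i, him, hxi⟩ := walk_prefix _ m x hxstep hqpre hxm
      exact ⟨i, him, by rw [hcx i him, hxi, hqe]⟩

end Aux

/-- **Proposition 3.4.** If `rad(K) ≥ r`, then for any coset `Kg` in the Schreier graph
of `K ≤ F_d` at distance more than `r` from the root, there is a unique `g_r ∈ F_d`
with `|g_r| = r` such that every path in the Schreier graph from `Kg` to the root `K`
passes through `K g_r`. -/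
theorem unique_prefix_of_radGE (d r : ℕ) (hd : 2 ≤ d)
    (K : Subgroup (FreeGroup (Fin d))) (hrad : RadGE K r)
    (g : FreeGroup (Fin d))
    (hfar : r < cosetDist (genSet d) K (rcMk K g)) :
    ∃! f : FreeGroup (Fin d), flen f = r ∧
      ∀ (m : ℕ) (c : ℕ → RightCoset K),
        c 0 = rcMk K g → c m = rcMk K 1 →
        (∀ i < m, ∃ s ∈ genSet d, c (i + 1) = cosetMul K (c i) s) →
        ∃ i ≤ m, c i = rcMk K f := by
  obtain ⟨p, hp, hplen⟩ := exists_min_rep (K := K) (rcMk K g)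
  have hfar' : r < FreeGroup.norm p := by rw [hplen]; exact hfar
  have hrlen : r ≤ p.toWord.length := le_of_lt hfar'
  refine ⟨FreeGroup.mk (p.toWord.take r), ⟨?_, ?_⟩, ?_⟩
  · rw [flen_eq_norm]
    exact norm_mk_take hrlen
  · intro m c h0 hm hstep
    exact exists_pass r K hrad g p hp hplen m c h0 hm hstep
  · rintro f' ⟨hf'len, hf'path⟩
    set n := FreeGroup.norm p with hn
    have hwl : p.toWord.length = n := rfl
    set c : ℕ → RightCoset K := fun i => rcMk K (FreeGroup.mk (p.toWord.take (n - i))) with hc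
    have hc0 : c 0 = rcMk K g := by
      show rcMk K (FreeGroup.mk (p.toWord.take (n - 0))) = rcMk K g
      rw [Nat.sub_zero, ← hwl, List.take_length, FreeGroup.mk_toWord, hp]
    have hcn : c n = rcMk K 1 := by
      show rcMk K (FreeGroup.mk (p.toWord.take (n - n))) = rcMk K 1
      rw [Nat.sub_self, List.take_zero, ← FreeGroup.one_eq_mk]
    have hcstep : ∀ i < n, ∃ s ∈ genSet d, c (i + 1) = cosetMul K (c i) s := by
      intro i hi
      have hidx : n - i - 1 < p.toWord.length := by omega
      refine ⟨(FreeGroup.mk [p.toWord[n - i - 1]])⁻¹,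
        genSet_inv (mk_single_mem_genSet _), ?_⟩
      show rcMk K (FreeGroup.mk (p.toWord.take (n - i - 1))) =
        cosetMul K (rcMk K (FreeGroup.mk (p.toWord.take (n - i)))) _
      rw [cosetMul_rcMk]
      congr 1
      have hsplit : p.toWord.take (n - i) =
          p.toWord.take (n - i - 1) ++ [p.toWord[n - i - 1]] := by
        conv_lhs => rw [show n - i = (n - i - 1) + 1 by omega]
        exact (List.take_concat_get' _ _ hidx).symm
      rw [hsplit, ← FreeGroup.mul_mk, mul_inv_cancel_right]
    obtain ⟨i₀, hi₀, hci₀⟩ := hf'path n c hc0 hcn hcstep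
    have hdist0 : cosetDist (genSet d) K (c 0) = n := by
      rw [hc0, ← hplen]
    have hchain := path_dist n c hcstep i₀ hi₀
    have hdf' : cosetDist (genSet d) K (c i₀) ≤ r := by
      rw [hci₀]
      calc cosetDist (genSet d) K (rcMk K f') ≤ FreeGroup.norm f' := cosetDist_le_norm f'
        _ = r := by rw [← flen_eq_norm, hf'len]
    have hpk : rcMk K (FreeGroup.mk (p.toWord.take (n - i₀))) = rcMk K f' := by
      rw [← hci₀]
    have hh₂ : f' * (FreeGroup.mk (p.toWord.take (n - i₀)))⁻¹ ∈ K := rcMk_eq_iff.mp hpk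
    by_cases h₂1 : f' * (FreeGroup.mk (p.toWord.take (n - i₀)))⁻¹ = 1
    · have hfp : f' = FreeGroup.mk (p.toWord.take (n - i₀)) := by
        rwa [mul_inv_eq_one] at h₂1
      have hnormtk : FreeGroup.norm (FreeGroup.mk (p.toWord.take (n - i₀))) = n - i₀ :=
        norm_mk_take (by omega)
      have hkr : n - i₀ = r := by
        have h5 : FreeGroup.norm f' = r := by rw [← flen_eq_norm, hf'len]
        rw [hfp] at h5
        omega
      rw [hfp, hkr]
    · exfalso
      obtain ⟨_, h2r⟩ := rad_spec hrad hh₂ h₂1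
      have h6 : FreeGroup.norm (f' * (FreeGroup.mk (p.toWord.take (n - i₀)))⁻¹)
          ≤ r + (n - i₀) := by
        calc FreeGroup.norm (f' * (FreeGroup.mk (p.toWord.take (n - i₀)))⁻¹)
            ≤ FreeGroup.norm f' + FreeGroup.norm (FreeGroup.mk (p.toWord.take (n - i₀)))⁻¹ :=
              FreeGroup.norm_mul_le _ _
          _ = r + (n - i₀) := by
              rw [FreeGroup.norm_inv_eq, norm_mk_take (by omega : n - i₀ ≤ p.toWord.length),
                ← flen_eq_norm, hf'len]
      have h7 : FreeGroup.norm (f' * (FreeGroup.mk (p.toWord.take (n - i₀)))⁻¹)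
          = (f' * (FreeGroup.mk (p.toWord.take (n - i₀)))⁻¹).toWord.length := rfl
      have h8 := path_dist n c hcstep i₀ hi₀
      omega

end Paper
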